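/- If λ₁, ..., λₙ are real numbers with ∑λᵢ = 0 and ∑λᵢ² = 1 (n ≥ 2), then ∑λᵢ³ ≤ (n−2)/√(n(n−1)), with equality when n−1 of the λᵢ are equal to −1/√(n(n−1)) and one equals (n−1)/√(n(n−1)). -/

import Mathlib

/-- If `λ₁, …, λₙ` are reals with `∑ λᵢ = 0` and `∑ λᵢ² = 1` (`n ≥ 2`), then
`∑ λᵢ³ ≤ (n−2)/√(n(n−1))`, with equality when `n−1` of the `λᵢ` equal
`−1/√(n(n−1))` and one equals `(n−1)/√(n(n−1))`. -/
theorem sum_cubes_le (n : ℕ) (hn : 2 ≤ n) :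
    (∀ l : Fin n → ℝ, ∑ i, l i = 0 → ∑ i, (l i) ^ 2 = 1 →
      ∑ i, (l i) ^ 3 ≤ ((n : ℝ) - 2) / Real.sqrt (n * (n - 1))) ∧
    (∀ l : Fin n → ℝ,
      (∃ j, (∀ i ≠ j, l i = -1 / Real.sqrt (n * (n - 1))) ∧
        l j = ((n : ℝ) - 1) / Real.sqrt (n * (n - 1))) →
      ∑ i, (l i) ^ 3 = ((n : ℝ) - 2) / Real.sqrt (n * (n - 1))) := by
  have hn2 : (2:ℝ) ≤ (n:ℝ) := by exact_mod_cast hn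
  have hpos : (0:ℝ) < (n:ℝ) * ((n:ℝ) - 1) := by nlinarith
  set s := Real.sqrt ((n:ℝ) * ((n:ℝ) - 1)) with hsdef
  have hspos : 0 < s := Real.sqrt_pos.2 hpos
  have hs2 : s ^ 2 = (n:ℝ) * ((n:ℝ) - 1) := Real.sq_sqrt hpos.le
  set m : ℝ := -1 / s with hmdef
  set M : ℝ := ((n:ℝ) - 1) / s with hMdef
  have hMpos : 0 < M := by
    apply div_pos (by linarith) hspos
  constructor
  · intro l hsum hsq
    -- each l j ≤ M
    have hle : ∀ j, l j ≤ M := by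
      intro j
      have h1 : ∑ i ∈ Finset.univ.erase j, l i = -(l j) := by
        have := Finset.add_sum_erase Finset.univ l (Finset.mem_univ j)
        linarith [hsum, this]
      have h2 : ∑ i ∈ Finset.univ.erase j, (l i) ^ 2 = 1 - (l j) ^ 2 := by
        have := Finset.add_sum_erase Finset.univ (fun i => (l i) ^ 2) (Finset.mem_univ j)
        linarith [hsq, this]
      have hcs := sq_sum_le_card_mul_sum_sq (s := Finset.univ.erase j) (f := l)
      rw [h1, h2, Finset.card_erase_of_mem (Finset.mem_univ j), Finset.card_univ,
        Fintype.card_fin] at hcs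
      have hcard : ((n - 1 : ℕ) : ℝ) = (n:ℝ) - 1 := by
        have h1n : 1 ≤ n := by omega
        push_cast [h1n]; ring
      rw [hcard] at hcs
      have hsq' : (l j) ^ 2 ≤ M ^ 2 := by
        have hM2 : M ^ 2 = ((n:ℝ) - 1) / (n:ℝ) := by
          rw [hMdef, div_pow, hs2]
          rw [div_eq_div_iff (by positivity) (by positivity)]
          ring
        have hn0 : (0:ℝ) < (n:ℝ) := by linarith
        rw [hM2, le_div_iff₀ hn0]
        nlinarith [hcs]
      calc l j ≤ |l j| := le_abs_self _
        _ = Real.sqrt ((l j) ^ 2) := (Real.sqrt_sq_eq_abs _).symm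
        _ ≤ Real.sqrt (M ^ 2) := Real.sqrt_le_sqrt hsq'
        _ = M := Real.sqrt_sq hMpos.le
    -- pointwise inequality
    have hpt : ∀ j, (l j) ^ 3 ≤ (2*m + M) * (l j)^2 - (m^2 + 2*m*M) * (l j) + m^2 * M := by
      intro j
      nlinarith [sq_nonneg (l j - m), hle j, sq_nonneg (l j - m)]
    calc ∑ i, (l i) ^ 3
        ≤ ∑ i, ((2*m + M) * (l i)^2 - (m^2 + 2*m*M) * (l i) + m^2 * M) :=
          Finset.sum_le_sum fun i _ => hpt i
      _ = (2*m + M) * (∑ i, (l i)^2) - (m^2 + 2*m*M) * (∑ i, l i) + n * (m^2 * M) := by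
          rw [Finset.sum_add_distrib, Finset.sum_sub_distrib, ← Finset.mul_sum, ← Finset.mul_sum,
            Finset.sum_const, Finset.card_univ, Fintype.card_fin, nsmul_eq_mul]
      _ = (2*m + M) + n * (m^2 * M) := by rw [hsum, hsq]; ring
      _ = ((n:ℝ) - 2) / s := by
          rw [hmdef, hMdef]
          have hs0 : s ≠ 0 := hspos.ne'
          field_simp
          linear_combination (-1) * hs2
  · intro l ⟨j, hrest, hj⟩
    have : ∑ i, (l i) ^ 3 = (l j)^3 + ∑ i ∈ Finset.univ.erase j, (l i) ^ 3 :=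
      (Finset.add_sum_erase Finset.univ (fun i => (l i) ^ 3) (Finset.mem_univ j)).symm
    rw [this]
    have hconst : ∑ i ∈ Finset.univ.erase j, (l i) ^ 3 = ((n:ℝ) - 1) * m ^ 3 := by
      rw [Finset.sum_congr rfl (fun i hi => by
        rw [hrest i (Finset.ne_of_mem_erase hi), hmdef])]
      rw [Finset.sum_const, Finset.card_erase_of_mem (Finset.mem_univ j), Finset.card_univ,
        Fintype.card_fin, nsmul_eq_mul]
      have : 1 ≤ n := by omega
      push_cast [this]; ring
    rw [hconst, hj]
    have hs0 : s ≠ 0 := hspos.ne'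
    rw [hmdef, hMdef]
    field_simp
    linear_combination (-((n:ℝ)-2)) * hs2
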